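/- For every integer $n \ge 1$ and every real $\theta > 0$, $\sum_{\alpha} n! \prod_{j=1}^{n} \frac{(\theta/j)^{\alpha_j}}{\alpha_j!} = \theta(\theta+1)\cdots(\theta+n-1)$, where the sum is over all tuples $(\alpha_1,\ldots,\alpha_n)$ of nonnegative integers with $\sum_{j=1}^{n} j\,\alpha_j = n$. Equivalently, the Ewens Sampling Formula $p_E(\alpha_1,\ldots,\alpha_n) = \frac{n!}{\theta^{(n)}} \prod_{j=1}^{n} \big(\frac{\theta}{j}\big)^{\alpha_j} \frac{1}{\alpha_j!}$ defines a probability distribution on such tuples. -/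

import Mathlib

open Finset

noncomputable def esfW (θ : ℝ) (n : ℕ) (i : Fin n) (a : ℕ) : ℝ :=
  (θ / ((i : ℕ) + 1)) ^ a / (Nat.factorial a : ℝ)

def esfTset (n k : ℕ) : Finset (Fin n → ℕ) :=
  (Fintype.piFinset fun _ : Fin n => Finset.range (n + 1)).filter
    (fun α => ∑ i : Fin n, ((i : ℕ) + 1) * α i = k)

noncomputable def esfF (θ : ℝ) (n k : ℕ) : ℝ :=
  ∑ α ∈ esfTset n k, ∏ i : Fin n, esfW θ n i (α i)

lemma mem_esfTset {n k : ℕ} {α : Fin n → ℕ} :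
    α ∈ esfTset n k ↔ (∀ i, α i < n + 1) ∧ ∑ i : Fin n, ((i : ℕ) + 1) * α i = k := by
  simp [esfTset, Fintype.mem_piFinset]

lemma esf_term_le {n k : ℕ} {α : Fin n → ℕ} (hα : α ∈ esfTset n k) (i : Fin n) :
    ((i : ℕ) + 1) * α i ≤ k := by
  rw [mem_esfTset] at hα
  rw [← hα.2]
  exact Finset.single_le_sum (f := fun t : Fin n => ((t : ℕ) + 1) * α t)
    (fun t _ => Nat.zero_le _) (Finset.mem_univ i)

lemma esf_sum_split {n : ℕ} (i : Fin n) (γ : Fin n → ℕ) :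
    ∑ t : Fin n, ((t : ℕ) + 1) * γ t
      = ((i : ℕ) + 1) * γ i + ∑ t ∈ Finset.univ.erase i, ((t : ℕ) + 1) * γ t :=
  (Finset.add_sum_erase _ _ (Finset.mem_univ i)).symm

lemma esf_erase_sum_update {n : ℕ} (i : Fin n) (γ : Fin n → ℕ) (c : ℕ) :
    ∑ t ∈ Finset.univ.erase i, ((t : ℕ) + 1) * (Function.update γ i c) t
      = ∑ t ∈ Finset.univ.erase i, ((t : ℕ) + 1) * γ t :=
  Finset.sum_congr rfl (fun t ht => by
    rw [Function.update_of_ne (Finset.ne_of_mem_erase ht)])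

lemma esfF_zero (θ : ℝ) (n : ℕ) : esfF θ n 0 = 1 := by
  have h : esfTset n 0 = {fun _ => 0} := by
    ext α
    simp only [mem_esfTset, Finset.mem_singleton]
    constructor
    · rintro ⟨h1, h2⟩
      funext i
      have := Finset.sum_eq_zero_iff.mp h2 i (Finset.mem_univ i)
      exact (Nat.mul_eq_zero.mp this).resolve_left (by omega)
    · rintro rfl
      exact ⟨fun i => by simp, by simp⟩
  simp [esfF, h, esfW]

lemma esf_step (θ : ℝ) (n k : ℕ) (hk : k ≤ n) (i : Fin n) (hi : (i : ℕ) + 1 ≤ k) :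
    ∑ α ∈ esfTset n k, ((((i : ℕ) : ℝ) + 1) * (α i : ℝ)) * ∏ t : Fin n, esfW θ n t (α t)
      = θ * esfF θ n (k - ((i : ℕ) + 1)) := by
  rw [← Finset.sum_filter_of_ne (p := fun α : Fin n → ℕ => α i ≠ 0)
        (by intro α _ hne h0; rw [h0] at hne; simp at hne)]
  rw [esfF, Finset.mul_sum]
  refine Finset.sum_nbij' (fun α => Function.update α i (α i - 1))
    (fun β => Function.update β i (β i + 1)) ?_ ?_ ?_ ?_ ?_
  · intro α hα
    rw [Finset.mem_filter] at hα
    obtain ⟨hα, hne⟩ := hα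
    have hterm := esf_term_le hα i
    rw [mem_esfTset] at hα
    beta_reduce
    rw [mem_esfTset]
    constructor
    · intro t
      rcases eq_or_ne t i with rfl | ht
      · rw [Function.update_self]; have := hα.1 t; omega
      · rw [Function.update_of_ne ht]; exact hα.1 t
    · rw [esf_sum_split i, esf_erase_sum_update, Function.update_self]
      have h3 := esf_sum_split i α
      rw [hα.2] at h3
      have hne' : 1 ≤ α i := Nat.one_le_iff_ne_zero.mpr hne
      have hmul : ((i : ℕ) + 1) * (α i - 1) + ((i : ℕ) + 1) = ((i : ℕ) + 1) * α i := by
        rw [← Nat.mul_succ]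
        congr 1
        omega
      omega
  · intro β hβ
    have hterm := esf_term_le hβ i
    rw [mem_esfTset] at hβ
    beta_reduce
    rw [Finset.mem_filter, mem_esfTset]
    have hβi : β i < n := by
      have h1 : β i ≤ ((i : ℕ) + 1) * β i := Nat.le_mul_of_pos_left _ (by omega)
      omega
    refine ⟨⟨?_, ?_⟩, ?_⟩
    · intro t
      rcases eq_or_ne t i with rfl | ht
      · rw [Function.update_self]; omega
      · rw [Function.update_of_ne ht]; exact hβ.1 t
    · rw [esf_sum_split i, esf_erase_sum_update, Function.update_self]
      have h3 := esf_sum_split i β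
      rw [hβ.2] at h3
      rw [Nat.mul_succ]
      omega
    · rw [Function.update_self]; omega
  · intro α hα
    rw [Finset.mem_filter] at hα
    beta_reduce
    rw [Function.update_self]
    funext t
    rcases eq_or_ne t i with rfl | ht
    · rw [Function.update_self]
      have : α t ≠ 0 := hα.2
      omega
    · rw [Function.update_of_ne ht, Function.update_of_ne ht]
  · intro β _
    beta_reduce
    rw [Function.update_self]
    funext t
    rcases eq_or_ne t i with rfl | ht
    · rw [Function.update_self]; omega
    · rw [Function.update_of_ne ht, Function.update_of_ne ht]
  · intro α hα
    rw [Finset.mem_filter] at hα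
    obtain ⟨hα, hne⟩ := hα
    beta_reduce
    rw [← Finset.mul_prod_erase _ _ (Finset.mem_univ i),
        ← Finset.mul_prod_erase _ (fun t => esfW θ n t (Function.update α i (α i - 1) t))
          (Finset.mem_univ i)]
    have hprod : ∏ t ∈ Finset.univ.erase i, esfW θ n t (Function.update α i (α i - 1) t)
        = ∏ t ∈ Finset.univ.erase i, esfW θ n t (α t) :=
      Finset.prod_congr rfl (fun t ht => by
        rw [Function.update_of_ne (Finset.ne_of_mem_erase ht)])
    rw [hprod, Function.update_self]
    obtain ⟨b, hb⟩ : ∃ b, α i = b + 1 := ⟨α i - 1, by omega⟩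
    rw [hb]
    simp only [Nat.add_sub_cancel]
    rw [esfW, esfW, pow_succ, Nat.factorial_succ]
    have h1 : ((i : ℕ) : ℝ) + 1 ≠ 0 := by positivity
    have h2 : ((b + 1 : ℕ) : ℝ) ≠ 0 := by positivity
    have h3 : ((Nat.factorial b : ℕ) : ℝ) ≠ 0 := by positivity
    push_cast
    field_simp

lemma esf_rec (θ : ℝ) (n k : ℕ) (hk : k ≤ n) :
    (k : ℝ) * esfF θ n k = θ * ∑ m ∈ Finset.range k, esfF θ n m := by
  have lhs : (k : ℝ) * esfF θ n k
      = ∑ i : Fin n, ∑ α ∈ esfTset n k,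
          ((((i : ℕ) : ℝ) + 1) * (α i : ℝ)) * ∏ t : Fin n, esfW θ n t (α t) := by
    rw [esfF, Finset.mul_sum, Finset.sum_comm]
    refine Finset.sum_congr rfl fun α hα => ?_
    rw [← Finset.sum_mul]
    congr 1
    have h2 := (mem_esfTset.mp hα).2
    calc (k : ℝ) = ((∑ i : Fin n, ((i : ℕ) + 1) * α i : ℕ) : ℝ) := by rw [h2]
      _ = ∑ i : Fin n, ((((i : ℕ) : ℝ) + 1) * (α i : ℝ)) := by push_cast; rfl
  rw [lhs]
  have step2 : ∀ i : Fin n,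
      ∑ α ∈ esfTset n k, ((((i : ℕ) : ℝ) + 1) * (α i : ℝ)) * ∏ t : Fin n, esfW θ n t (α t)
        = if (i : ℕ) + 1 ≤ k then θ * esfF θ n (k - ((i : ℕ) + 1)) else 0 := by
    intro i
    split_ifs with h
    · exact esf_step θ n k hk i h
    · refine Finset.sum_eq_zero fun α hα => ?_
      have h1 := esf_term_le hα i
      have h0 : α i = 0 := by
        by_contra h0
        have h3 : (i : ℕ) + 1 ≤ ((i : ℕ) + 1) * α i :=
          Nat.le_mul_of_pos_right _ (Nat.pos_of_ne_zero h0)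
        omega
      rw [h0]
      simp
  rw [Finset.sum_congr rfl (fun i _ => step2 i)]
  rw [Fin.sum_univ_eq_sum_range
    (fun j => if j + 1 ≤ k then θ * esfF θ n (k - (j + 1)) else 0) n]
  rw [← Finset.sum_filter]
  have hfil : (Finset.range n).filter (fun j => j + 1 ≤ k) = Finset.range k := by
    ext j; simp; omega
  rw [hfil, Finset.mul_sum]
  rw [← Finset.sum_range_reflect (fun m => θ * esfF θ n m) k]
  refine Finset.sum_congr rfl fun j hj => ?_
  have h5 : k - (j + 1) = k - 1 - j := by omega
  rw [h5]

lemma esf_hockey (θ : ℝ) : ∀ k : ℕ,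
    θ * ∑ m ∈ Finset.range k, (∏ t ∈ Finset.range m, (θ + t)) / (Nat.factorial m : ℝ)
      = (k : ℝ) * (∏ t ∈ Finset.range k, (θ + t)) / (Nat.factorial k : ℝ) := by
  intro k
  induction k with
  | zero => simp
  | succ k ih =>
    rw [Finset.sum_range_succ, mul_add, ih, Finset.prod_range_succ, Nat.factorial_succ]
    have h1 : ((Nat.factorial k : ℕ) : ℝ) ≠ 0 := by positivity
    have h2 : ((k : ℝ) + 1) ≠ 0 := by positivity
    push_cast
    field_simp
    ring

lemma esfF_eq (θ : ℝ) (n : ℕ) : ∀ k, k ≤ n →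
    esfF θ n k = (∏ t ∈ Finset.range k, (θ + t)) / (Nat.factorial k : ℝ) := by
  intro k
  induction k using Nat.strong_induction_on with
  | _ k ih =>
    intro hk
    rcases Nat.eq_zero_or_pos k with rfl | hk1
    · simp [esfF_zero]
    · have hrec := esf_rec θ n k hk
      have hsum : ∑ m ∈ Finset.range k, esfF θ n m
          = ∑ m ∈ Finset.range k, (∏ t ∈ Finset.range m, (θ + t)) / (Nat.factorial m : ℝ) :=
        Finset.sum_congr rfl fun m hm =>
          ih m (Finset.mem_range.mp hm) (le_trans (le_of_lt (Finset.mem_range.mp hm)) hk)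
      rw [hsum, esf_hockey] at hrec
      have hk0 : (k : ℝ) ≠ 0 := by positivity
      rw [mul_div_assoc] at hrec
      exact mul_left_cancel₀ hk0 hrec

/-- All tuples `(α_1, …, α_n)` of nonnegative integers with `∑_j j α_j = n`
(here `α i` stands for `α_{i+1}`; any solution automatically has each entry `≤ n`,
so this finset captures exactly the solution set). -/
def esfTuples (n : ℕ) : Finset (Fin n → ℕ) :=
  (Fintype.piFinset fun _ : Fin n => Finset.range (n + 1)).filter
    (fun α => ∑ i : Fin n, ((i : ℕ) + 1) * α i = n)

/-- The Ewens Sampling Formula is a probability distribution: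
`∑_α n! ∏_{j=1}^n (θ/j)^{α_j} / α_j! = θ(θ+1)⋯(θ+n-1)`, the sum over all tuples
`(α_1,…,α_n)` of nonnegative integers with `∑_j j α_j = n`. -/
theorem stmt_13 (n : ℕ) (hn : 1 ≤ n) (θ : ℝ) (hθ : 0 < θ) :
    ∑ α ∈ esfTuples n,
        (Nat.factorial n : ℝ) *
          ∏ i : Fin n, (θ / ((i : ℕ) + 1)) ^ (α i) / (Nat.factorial (α i) : ℝ)
      = ∏ i ∈ Finset.range n, (θ + i) := by
  have he : esfTuples n = esfTset n n := rfl
  have hL : ∑ α ∈ esfTuples n,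
        (Nat.factorial n : ℝ) *
          ∏ i : Fin n, (θ / ((i : ℕ) + 1)) ^ (α i) / (Nat.factorial (α i) : ℝ)
      = (Nat.factorial n : ℝ) * esfF θ n n := by
    rw [he, esfF, Finset.mul_sum]
    exact Finset.sum_congr rfl fun α _ => by rw [show (fun i : Fin n => esfW θ n i (α i)) = fun i : Fin n => (θ / ((i : ℕ) + 1)) ^ (α i) / (Nat.factorial (α i) : ℝ) from rfl]
  rw [hL, esfF_eq θ n n le_rfl]
  have h0 : ((Nat.factorial n : ℕ) : ℝ) ≠ 0 := by positivity
  rw [mul_div_cancel₀ _ h0]
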